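/- Let a ∈ ℂ with -1 < Re a < 0, ε > 0, and x ∈ ℝ. Then ∫₀^∞ y^a/(x - y + iε) dy = (π/ sin(πa)) · e^{-iπa} · (x + iε)^a, where (x+iε)^a = exp(a Log(x+iε)) with Log the principal branch of the logarithm on ℂ ∖ (-∞, 0]. -/

import Mathlib

open Complex MeasureTheory Set Metric Filter


lemma aux_cont (s : ℝ) (n : ℕ) :
    ContinuousOn (fun y : ℝ => y ^ s * ((1+y)^n)⁻¹) (Ioi 0) := by
  apply ContinuousOn.mul
  · exact ContinuousOn.rpow_const continuousOn_id (fun y hy => Or.inl (ne_of_gt hy))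
  · apply ContinuousOn.inv₀ (by fun_prop)
    intro y hy
    simp only [mem_Ioi] at hy
    positivity

lemma aux_int (s : ℝ) (hs : -1 < s) (n : ℕ) (hn : s - n < -1) :
    IntegrableOn (fun y : ℝ => y ^ s * ((1+y)^n)⁻¹) (Ioi 0) := by
  have hmeas : ∀ t ⊆ Ioi (0:ℝ), MeasurableSet t →
      AEStronglyMeasurable (fun y : ℝ => y ^ s * ((1+y)^n)⁻¹) (volume.restrict t) :=
    fun t ht hmt => ((aux_cont s n).mono ht).aestronglyMeasurable hmt
  have h01 : IntegrableOn (fun y : ℝ => y ^ s * ((1+y)^n)⁻¹) (Ioc 0 1) := by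
    have hbase : IntegrableOn (fun y : ℝ => y ^ s) (Ioc 0 1) := by
      have := intervalIntegral.intervalIntegrable_rpow' (a := 0) (b := 1) hs
      rwa [intervalIntegrable_iff_integrableOn_Ioc_of_le zero_le_one] at this
    apply hbase.mono' (hmeas _ Ioc_subset_Ioi_self measurableSet_Ioc)
    filter_upwards [ae_restrict_mem measurableSet_Ioc] with y hy
    have hy0 : 0 < y := hy.1
    rw [Real.norm_eq_abs, abs_mul, _root_.abs_of_nonneg (Real.rpow_nonneg hy0.le s),
      _root_.abs_of_nonneg (by positivity)]
    nth_rewrite 2 [← mul_one (y ^ s)]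
    gcongr
    rw [inv_le_one_iff₀]
    right
    exact one_le_pow₀ (by linarith)
  have h1i : IntegrableOn (fun y : ℝ => y ^ s * ((1+y)^n)⁻¹) (Ioi 1) := by
    have hbase : IntegrableOn (fun y : ℝ => y ^ (s - n)) (Ioi 1) :=
      integrableOn_Ioi_rpow_of_lt hn one_pos
    apply hbase.mono' (hmeas _ (Ioi_subset_Ioi zero_le_one) measurableSet_Ioi)
    filter_upwards [ae_restrict_mem measurableSet_Ioi] with y hy
    simp only [mem_Ioi] at hy
    have hy0 : 0 < y := by linarith
    rw [Real.norm_eq_abs, abs_mul, _root_.abs_of_nonneg (Real.rpow_nonneg hy0.le s),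
      _root_.abs_of_nonneg (by positivity), Real.rpow_sub hy0, div_eq_mul_inv]
    gcongr
    rw [← Real.rpow_natCast (1+y) n]
    gcongr
    linarith
  have : Ioc (0:ℝ) 1 ∪ Ioi 1 = Ioi 0 := Ioc_union_Ioi_eq_Ioi zero_le_one
  rw [← this]
  exact h01.union h1i


lemma aux_lb (z₀ : ℂ) (hz₀ : z₀.re < 0 ∨ z₀.im ≠ 0) :
    ∃ r > 0, ∃ c > 0, ∀ z ∈ ball z₀ r, ∀ y : ℝ, 0 ≤ y → c * (1 + y) ≤ ‖z - (y:ℂ)‖ := by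
  set d : ℝ := max (-z₀.re) |z₀.im| with hd_def
  have hd : 0 < d := by
    rcases hz₀ with h | h
    · exact lt_max_of_lt_left (by linarith)
    · exact lt_max_of_lt_right (abs_pos.mpr h)
  have key0 : ∀ y : ℝ, 0 ≤ y → d ≤ ‖z₀ - (y:ℂ)‖ := by
    intro y hy
    rcases max_cases (-z₀.re) |z₀.im| with ⟨he, _⟩ | ⟨he, _⟩ <;> rw [hd_def, he]
    · calc -z₀.re ≤ |(z₀ - (y:ℂ)).re| := by
            simp only [Complex.sub_re, Complex.ofReal_re]
            rw [abs_sub_comm, le_abs]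
            left; linarith
        _ ≤ ‖z₀ - (y:ℂ)‖ := by exact Complex.abs_re_le_norm _
    · calc |z₀.im| = |(z₀ - (y:ℂ)).im| := by simp
        _ ≤ ‖z₀ - (y:ℂ)‖ := by exact Complex.abs_im_le_norm _
  set M : ℝ := ‖z₀‖ + d / 2 with hM_def
  have hM : 0 < M := by positivity
  set Y : ℝ := 2 * M + 2 with hY_def
  have hY : 0 < Y := by positivity
  refine ⟨d / 2, by positivity, min (d / (2 * (1 + Y))) 4⁻¹, by positivity, ?_⟩
  intro z hz y hy
  rw [mem_ball, dist_eq_norm] at hz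
  set c : ℝ := min (d / (2 * (1 + Y))) 4⁻¹ with hc_def
  have hc1 : c ≤ d / (2 * (1 + Y)) := min_le_left _ _
  have hc2 : c ≤ 4⁻¹ := min_le_right _ _
  have hc0 : 0 < c := by positivity
  clear_value d M Y c
  have h1 : d / 2 ≤ ‖z - (y:ℂ)‖ := by
    have ht : ‖z₀ - (y:ℂ)‖ ≤ ‖z₀ - z‖ + ‖z - (y:ℂ)‖ := norm_sub_le_norm_sub_add_norm_sub _ _ _
    rw [norm_sub_rev z₀ z] at ht
    linarith [key0 y hy]
  have h2 : y - M ≤ ‖z - (y:ℂ)‖ := by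
    have hz' : ‖z‖ ≤ ‖z - z₀‖ + ‖z₀‖ := by
      have := norm_add_le (z - z₀) z₀
      rwa [sub_add_cancel] at this
    have ht : ‖(y:ℂ)‖ - ‖z‖ ≤ ‖z - (y:ℂ)‖ := by
      rw [norm_sub_rev]; exact norm_sub_norm_le _ _
    rw [Complex.norm_real, Real.norm_eq_abs, _root_.abs_of_nonneg hy] at ht
    have hzM : ‖z‖ ≤ M := by rw [hM_def]; linarith
    linarith
  rcases le_or_gt y Y with hcase | hcase
  · have h3 : c * (1 + y) ≤ (d / (2 * (1 + Y))) * (1 + Y) :=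
      mul_le_mul hc1 (by linarith) (by linarith) (by positivity)
    have h4 : (d / (2 * (1 + Y))) * (1 + Y) = d / 2 := by
      field_simp
    linarith
  · have h3 : c * (1 + y) ≤ 4⁻¹ * (1 + y) := by nlinarith
    have h4 : 4⁻¹ * (1 + y) ≤ y - M := by rw [hY_def] at hcase; linarith
    linarith


lemma aux_norm (a : ℂ) {y : ℝ} (hy : 0 < y) : ‖(y:ℂ) ^ a‖ = y ^ a.re := by
  rw [Complex.norm_cpow_eq_rpow_re_of_pos hy]

lemma aux_diff (a : ℂ) (h1 : -1 < a.re) (h2 : a.re < 0) (z₀ : ℂ) (hz₀ : z₀.re < 0 ∨ z₀.im ≠ 0) :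
    DifferentiableAt ℂ (fun z : ℂ => ∫ y in Set.Ioi (0:ℝ), (y:ℂ) ^ a / (z - (y:ℂ))) z₀ ∧
    IntegrableOn (fun y : ℝ => (y:ℂ) ^ a / (z₀ - (y:ℂ))) (Set.Ioi 0) := by
  obtain ⟨r, hr, c, hc, hbd⟩ := aux_lb z₀ hz₀
  have hne : ∀ z ∈ ball z₀ r, ∀ y : ℝ, 0 ≤ y → z - (y:ℂ) ≠ 0 := by
    intro z hz y hy h
    have h' := hbd z hz y hy
    rw [h, norm_zero] at h'
    nlinarith
  have hcont : ∀ z ∈ ball z₀ r,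
      AEStronglyMeasurable (fun y : ℝ => (y:ℂ) ^ a / (z - (y:ℂ)))
        (volume.restrict (Set.Ioi 0)) := by
    intro z hz
    apply ContinuousOn.aestronglyMeasurable _ measurableSet_Ioi
    apply ContinuousOn.div
    · exact (Complex.continuous_ofReal.continuousOn).cpow continuousOn_const (fun y hy => by
        rw [Complex.mem_slitPlane_iff]; left; simpa using hy)
    · fun_prop
    · intro y hy; exact hne z hz y (le_of_lt hy)
  have hcont' : AEStronglyMeasurable (fun y : ℝ => -((y:ℂ) ^ a / ((z₀ - (y:ℂ))^2)))
      (volume.restrict (Set.Ioi 0)) := by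
    apply ContinuousOn.aestronglyMeasurable _ measurableSet_Ioi
    apply ContinuousOn.neg
    apply ContinuousOn.div
    · exact (Complex.continuous_ofReal.continuousOn).cpow continuousOn_const (fun y hy => by
        rw [Complex.mem_slitPlane_iff]; left; simpa using hy)
    · fun_prop
    · intro y hy
      exact pow_ne_zero 2 (hne z₀ (mem_ball_self hr) y (le_of_lt hy))
  have hint : ∀ z ∈ ball z₀ r, IntegrableOn (fun y : ℝ => (y:ℂ) ^ a / (z - (y:ℂ))) (Set.Ioi 0) := by
    intro z hz
    have hb := (aux_int a.re h1 1 (by push_cast; linarith)).const_mul c⁻¹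
    apply Integrable.mono' hb (hcont z hz)
    filter_upwards [ae_restrict_mem measurableSet_Ioi] with y hy
    simp only [Set.mem_Ioi] at hy
    rw [norm_div, aux_norm a hy]
    have heq : c⁻¹ * (y ^ a.re * ((1+y)^1)⁻¹) = y ^ a.re / (c * (1+y)) := by
      rw [pow_one]; field_simp
    rw [heq]
    gcongr
    exact hbd z hz y hy.le
  have key := hasDerivAt_integral_of_dominated_loc_of_deriv_le
    (μ := volume.restrict (Set.Ioi (0:ℝ)))
    (F := fun (z : ℂ) (y : ℝ) => (y:ℂ) ^ a / (z - (y:ℂ)))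
    (F' := fun (z : ℂ) (y : ℝ) => -((y:ℂ) ^ a / ((z - (y:ℂ))^2)))
    (x₀ := z₀) (bound := fun y : ℝ => (c^2)⁻¹ * (y ^ a.re * ((1+y)^2)⁻¹))
    (Metric.ball_mem_nhds z₀ hr)
    (Filter.eventually_of_mem (Metric.ball_mem_nhds z₀ hr) hcont)
    (hint z₀ (mem_ball_self hr)) hcont' ?_ ?_ ?_
  · exact ⟨key.2.differentiableAt, hint z₀ (mem_ball_self hr)⟩
  · -- bound for F'
    filter_upwards [ae_restrict_mem measurableSet_Ioi] with y hy
    intro z hz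
    simp only [Set.mem_Ioi] at hy
    rw [norm_neg, norm_div, aux_norm a hy, norm_pow]
    have heq : (c^2)⁻¹ * (y ^ a.re * ((1+y)^2)⁻¹) = y ^ a.re / (c * (1+y))^2 := by
      rw [mul_pow]; field_simp
    rw [heq]
    gcongr y ^ a.re / ?_ ^ 2
    exact hbd z hz y hy.le
  · -- integrability of bound
    exact (aux_int a.re h1 2 (by push_cast; linarith)).const_mul _
  · -- differentiability
    filter_upwards [ae_restrict_mem measurableSet_Ioi] with y hy
    intro z hz
    simp only [Set.mem_Ioi] at hy
    have hne' : z - (y:ℂ) ≠ 0 := hne z hz y hy.le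
    have hd1 : HasDerivAt (fun z : ℂ => z - (y:ℂ)) 1 z := (hasDerivAt_id z).sub_const _
    have hd2 := hd1.inv hne'
    have hd3 := HasDerivAt.const_mul ((y:ℂ) ^ a) hd2
    have hfun : (fun w : ℂ => (y:ℂ) ^ a * (w - (y:ℂ))⁻¹)
        = fun w : ℂ => (y:ℂ) ^ a / (w - (y:ℂ)) := by
      funext w; rw [div_eq_mul_inv]
    simp only [Pi.inv_apply] at hd3
    rw [hfun] at hd3
    rwa [show (y:ℂ) ^ a * (-1 / (z - (y:ℂ)) ^ 2) = -((y:ℂ) ^ a / ((z - (y:ℂ))^2)) by ring] at hd3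


lemma aux_sin_ne (a : ℂ) (h1 : -1 < a.re) (h2 : a.re < 0) :
    Complex.sin ((Real.pi : ℂ) * a) ≠ 0 := by
  intro h
  rw [Complex.sin_eq_zero_iff] at h
  obtain ⟨k, hk⟩ := h
  have hπ : ((Real.pi : ℂ)) ≠ 0 := Complex.ofReal_ne_zero.mpr Real.pi_ne_zero
  have ha : a = (k : ℂ) := by
    have h' : a * (Real.pi : ℂ) = (k : ℂ) * (Real.pi : ℂ) := by
      rw [mul_comm] at hk; exact hk
    exact mul_right_cancel₀ hπ h'
  have hk1 : (-1 : ℝ) < (k : ℝ) := by rw [ha] at h1; simpa using h1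
  have hk2 : (k : ℝ) < 0 := by rw [ha] at h2; simpa using h2
  have : (0 : ℤ) ≤ k ∨ k ≤ -1 := by omega
  rcases this with h | h
  · exact absurd hk2 (not_lt.mpr (by exact_mod_cast h))
  · exact absurd hk1 (not_lt.mpr (by exact_mod_cast h))

lemma aux_J (a : ℂ) (h1 : -1 < a.re) (h2 : a.re < 0) :
    ∫ u in Set.Ioi (0:ℝ), (u:ℂ) ^ a / (1 + (u:ℂ))
      = -((Real.pi : ℂ) / Complex.sin ((Real.pi : ℂ) * a)) := by
  have himg : (fun t : ℝ => t / (1 - t)) '' (Ioo 0 1) = Ioi 0 := by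
    ext u
    simp only [mem_image, mem_Ioo, mem_Ioi]
    constructor
    · rintro ⟨t, ⟨ht0, ht1⟩, rfl⟩
      exact div_pos ht0 (by linarith)
    · intro hu
      have h1u : (0:ℝ) < 1 + u := by linarith
      refine ⟨u / (1 + u), ⟨by positivity, by rw [div_lt_one h1u]; linarith⟩, ?_⟩
      have hsub : 1 - u / (1 + u) = 1 / (1 + u) := by field_simp; ring
      rw [hsub, div_div_eq_mul_div, div_one, div_mul_cancel₀ _ h1u.ne']
  have hderiv : ∀ t ∈ Ioo (0:ℝ) 1,
      HasDerivWithinAt (fun t : ℝ => t / (1 - t)) (((1 - t)^2)⁻¹) (Ioo 0 1) t := by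
    intro t ht
    obtain ⟨ht0, ht1⟩ := ht
    have h1t : (1:ℝ) - t ≠ 0 := by intro h; linarith [sub_eq_zero.mp h]
    have hd := (hasDerivAt_id t).div ((hasDerivAt_id t).const_sub 1) h1t
    have : (1 * (1 - t) - t * -1) / (1 - t)^2 = ((1 - t)^2)⁻¹ := by
      field_simp
      ring
    simp only [id_eq] at hd
    rw [this] at hd
    exact hd.hasDerivWithinAt
  have hinj : InjOn (fun t : ℝ => t / (1 - t)) (Ioo 0 1) := by
    intro t1 ht1 t2 ht2 h
    obtain ⟨h10, h11⟩ := ht1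
    obtain ⟨h20, h21⟩ := ht2
    simp only at h
    rw [div_eq_div_iff (by linarith) (by linarith)] at h
    nlinarith
  have hsubst := integral_image_eq_integral_abs_deriv_smul measurableSet_Ioo hderiv hinj
      (fun u : ℝ => (u:ℂ) ^ a / (1 + (u:ℂ)))
  rw [himg] at hsubst
  have hcongr : ∀ t ∈ Ioo (0:ℝ) 1,
      |((1 - t)^2)⁻¹| • ((↑(t/(1-t)) : ℂ) ^ a / (1 + (↑(t/(1-t)) : ℂ)))
        = (t:ℂ) ^ (a + 1 - 1) * ((1:ℂ) - (t:ℂ)) ^ (-a - 1) := by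
    intro t ht
    obtain ⟨ht0, ht1⟩ := ht
    have hlt : (0:ℝ) < 1 - t := by linarith
    have hcne : ((1 - t : ℝ) : ℂ) ≠ 0 := Complex.ofReal_ne_zero.mpr hlt.ne'
    have hden' : 1 + t / (1 - t) = (1 - t)⁻¹ := by field_simp; ring
    have hden : (1:ℂ) + (↑(t/(1-t)) : ℂ) = ((↑(1 - t) : ℂ))⁻¹ := by
      rw [← Complex.ofReal_inv, ← hden']
      push_cast
      ring
    have harg : ((↑(1 - t) : ℂ)).arg ≠ Real.pi := by
      rw [Complex.arg_ofReal_of_nonneg hlt.le]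
      exact Real.pi_pos.ne
    have hnum : ((↑(t/(1-t)) : ℂ)) ^ a = (t:ℂ) ^ a * ((↑(1 - t) : ℂ)) ^ (-a) := by
      rw [show ((↑(t/(1-t)) : ℂ)) = ((t:ℂ) * ((((1-t)⁻¹ : ℝ)):ℂ)) by push_cast; ring,
        Complex.mul_cpow_ofReal_nonneg ht0.le (inv_nonneg.mpr hlt.le),
        Complex.ofReal_inv, Complex.inv_cpow _ _ harg, ← Complex.cpow_neg]
    rw [hden, hnum, _root_.abs_of_pos (by positivity : (0:ℝ) < ((1 - t)^2)⁻¹)]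
    rw [Complex.real_smul]
    have he1 : a + 1 - 1 = a := by ring
    have he2 : (-a - 1 : ℂ) = -a + -1 := by ring
    rw [he1, he2, show ((1:ℂ) - (t:ℂ)) = ((↑(1 - t) : ℂ)) by push_cast; ring,
      Complex.cpow_add _ _ hcne, Complex.cpow_neg_one]
    have hc2 : ((1:ℂ) - (t:ℂ)) ≠ 0 := by push_cast at hcne; exact hcne
    push_cast
    field_simp
  rw [hsubst, setIntegral_congr_fun measurableSet_Ioo hcongr,
    ← integral_Ioc_eq_integral_Ioo,
    ← intervalIntegral.integral_of_le (zero_le_one)]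
  have hbeta : Complex.betaIntegral (a + 1) (-a)
      = ∫ t in (0:ℝ)..1, (t:ℂ) ^ (a + 1 - 1) * ((1:ℂ) - (t:ℂ)) ^ (-a - 1) := rfl
  rw [← hbeta]
  have hre1 : 0 < (a + 1).re := by simp; linarith
  have hre2 : 0 < (-a).re := by simp; linarith
  have hGamma := Complex.Gamma_mul_Gamma_eq_betaIntegral hre1 hre2
  rw [show a + 1 + -a = 1 by ring, Complex.Gamma_one, one_mul] at hGamma
  rw [← hGamma]
  have hrefl := Complex.Gamma_mul_Gamma_one_sub (a + 1)
  rw [show (1:ℂ) - (a + 1) = -a by ring] at hrefl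
  rw [hrefl, show (Real.pi:ℂ) * (a + 1) = (Real.pi:ℂ) * a + Real.pi by push_cast; ring,
    Complex.sin_add_pi, div_neg]


lemma aux_Gneg (a : ℂ) (h1 : -1 < a.re) (h2 : a.re < 0) (c : ℝ) (hc : 0 < c) :
    ∫ y in Set.Ioi (0:ℝ), (y:ℂ) ^ a / (-(c:ℂ) - (y:ℂ))
      = (c:ℂ) ^ a * ((Real.pi : ℂ) / Complex.sin ((Real.pi : ℂ) * a)) := by
  have hscale := MeasureTheory.integral_comp_mul_left_Ioi
    (g := fun y : ℝ => (y:ℂ) ^ a / ((c:ℂ) + (y:ℂ))) 0 hc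
  rw [mul_zero] at hscale
  have hpt : ∀ x ∈ Set.Ioi (0:ℝ), ((c * x : ℝ):ℂ) ^ a / ((c:ℂ) + ((c * x : ℝ):ℂ))
      = ((c:ℂ) ^ a / (c:ℂ)) * ((x:ℂ) ^ a / (1 + (x:ℂ))) := by
    intro x hx
    simp only [Set.mem_Ioi] at hx
    push_cast
    rw [Complex.mul_cpow_ofReal_nonneg hc.le hx.le]
    have hcc : ((c:ℝ):ℂ) ≠ 0 := Complex.ofReal_ne_zero.mpr hc.ne'
    have h1x : (1:ℂ) + (x:ℂ) ≠ 0 := by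
      intro h
      have : ((1 + x : ℝ):ℂ) = 0 := by push_cast; rw [← h]
      have := Complex.ofReal_eq_zero.mp this
      linarith
    rw [show ((c:ℂ) + (c:ℂ) * (x:ℂ)) = (c:ℂ) * (1 + (x:ℂ)) by ring]
    field_simp
  rw [MeasureTheory.setIntegral_congr_fun measurableSet_Ioi hpt] at hscale
  rw [MeasureTheory.integral_const_mul] at hscale
  have hJ := aux_J a h1 h2
  rw [hJ] at hscale
  -- hscale : (c^a/c) * (-(π/sin)) = |c⁻¹| • ∫ y in Ioi 0, y^a/(c+y)
  have hcc : ((c:ℝ):ℂ) ≠ 0 := Complex.ofReal_ne_zero.mpr hc.ne'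
  have hP : ((c:ℂ) ^ a / (c:ℂ)) * -((Real.pi:ℂ) / Complex.sin ((Real.pi:ℂ) * a))
      = (c:ℝ)⁻¹ • (-((c:ℂ) ^ a * ((Real.pi:ℂ) / Complex.sin ((Real.pi:ℂ) * a)))) := by
    rw [Complex.real_smul]
    push_cast
    ring
  rw [hP] at hscale
  have h4 := congrArg (fun w => (c : ℝ) • w) hscale
  simp only [smul_smul, mul_inv_cancel₀ hc.ne', one_smul] at h4
  have hInt : ∫ y in Set.Ioi (0:ℝ), (y:ℂ) ^ a / ((c:ℂ) + (y:ℂ))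
      = -((c:ℂ) ^ a * ((Real.pi : ℂ) / Complex.sin ((Real.pi : ℂ) * a))) := h4.symm
  have hneg : ∀ y ∈ Set.Ioi (0:ℝ), (y:ℂ) ^ a / (-(c:ℂ) - (y:ℂ))
      = -((y:ℂ) ^ a / ((c:ℂ) + (y:ℂ))) := by
    intro y hy
    rw [← div_neg]
    congr 1
    ring
  rw [MeasureTheory.setIntegral_congr_fun measurableSet_Ioi hneg, MeasureTheory.integral_neg, hInt,
    neg_neg]


lemma aux_main (a : ℂ) (h1 : -1 < a.re) (h2 : a.re < 0) (z : ℂ) (hz : z.re < 0 ∨ z.im ≠ 0) :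
    ∫ y in Set.Ioi (0:ℝ), (y:ℂ) ^ a / (z - (y:ℂ))
      = ((Real.pi : ℂ) / Complex.sin ((Real.pi : ℂ) * a)) * (-z) ^ a := by
  set U : Set ℂ := {w : ℂ | w.re < 0 ∨ w.im ≠ 0} with hU_def
  have hUopen : IsOpen U := by
    apply IsOpen.union
    · exact isOpen_Iio.preimage Complex.continuous_re
    · exact isOpen_compl_singleton.preimage Complex.continuous_im
  have hUconn : IsPreconnected U := by
    have hA : IsPreconnected {w : ℂ | w.re < 0} := (convex_halfSpace_re_lt 0).isPreconnected
    have hB : IsPreconnected {w : ℂ | 0 < w.im} := (convex_halfSpace_im_gt 0).isPreconnected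
    have hC : IsPreconnected {w : ℂ | w.im < 0} := (convex_halfSpace_im_lt 0).isPreconnected
    have hAB : IsPreconnected ({w : ℂ | w.re < 0} ∪ {w : ℂ | 0 < w.im}) :=
      IsPreconnected.union (-1 + Complex.I) (by simp) (by simp) hA hB
    have hABC : IsPreconnected (({w : ℂ | w.re < 0} ∪ {w : ℂ | 0 < w.im}) ∪ {w : ℂ | w.im < 0}) :=
      IsPreconnected.union (-1 - Complex.I) (Or.inl (by simp)) (by simp) hAB hC
    have : U = ({w : ℂ | w.re < 0} ∪ {w : ℂ | 0 < w.im}) ∪ {w : ℂ | w.im < 0} := by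
      ext w
      simp only [hU_def, Set.mem_setOf_eq, Set.mem_union]
      constructor
      · rintro (h | h)
        · exact Or.inl (Or.inl h)
        · rcases lt_or_gt_of_ne h with h' | h'
          · exact Or.inr h'
          · exact Or.inl (Or.inr h')
      · rintro ((h | h) | h)
        · exact Or.inl h
        · exact Or.inr (ne_of_gt h)
        · exact Or.inr (ne_of_lt h)
    rwa [this]
  have hG : AnalyticOnNhd ℂ (fun w : ℂ => ∫ y in Set.Ioi (0:ℝ), (y:ℂ) ^ a / (w - (y:ℂ))) U :=
    DifferentiableOn.analyticOnNhd
      (fun w hw => ((aux_diff a h1 h2 w hw).1).differentiableWithinAt) hUopen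
  have hH : AnalyticOnNhd ℂ
      (fun w : ℂ => ((Real.pi : ℂ) / Complex.sin ((Real.pi : ℂ) * a)) * (-w) ^ a) U := by
    apply DifferentiableOn.analyticOnNhd _ hUopen
    intro w hw
    apply DifferentiableAt.differentiableWithinAt
    apply DifferentiableAt.const_mul
    apply DifferentiableAt.cpow (differentiable_id.neg.differentiableAt)
      (differentiableAt_const a)
    rw [Complex.mem_slitPlane_iff]
    rcases hw with h | h
    · left; simpa using h
    · right; simpa using h
  have hmem : (-1 : ℂ) ∈ U := by
    left
    simp
  have hfreq : ∃ᶠ w in nhdsWithin (-1 : ℂ) {(-1 : ℂ)}ᶜ,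
      (∫ y in Set.Ioi (0:ℝ), (y:ℂ) ^ a / (w - (y:ℂ)))
        = ((Real.pi : ℂ) / Complex.sin ((Real.pi : ℂ) * a)) * (-w) ^ a := by
    rw [Filter.frequently_iff]
    intro s hs
    rw [Metric.mem_nhdsWithin_iff] at hs
    obtain ⟨δ, hδ, hball⟩ := hs
    set c : ℝ := 1 + δ / 2 with hc_def
    have hc : 0 < c := by positivity
    refine ⟨(-(c : ℝ) : ℂ), hball ⟨?_, ?_⟩, ?_⟩
    · rw [mem_ball, dist_eq_norm]
      have : (-(c:ℝ) : ℂ) - (-1) = ((-(δ/2) : ℝ) : ℂ) := by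
        rw [hc_def]; push_cast; ring
      rw [this, Complex.norm_real, Real.norm_eq_abs]
      rw [abs_of_nonpos (by linarith)]
      linarith
    · simp only [Set.mem_compl_iff, Set.mem_singleton_iff]
      intro h
      have : (-c : ℝ) = -1 := by exact_mod_cast h
      rw [hc_def] at this
      linarith
    · have hGneg := aux_Gneg a h1 h2 c hc
      have he1 : ∀ y : ℝ, ((-(c:ℝ)) : ℂ) - (y:ℂ) = -(c:ℂ) - (y:ℂ) := by
        intro y; push_cast; ring
      have he2 : (-((-(c:ℝ)) : ℂ)) = ((c:ℝ) : ℂ) := by push_cast; ring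
      calc ∫ y in Set.Ioi (0:ℝ), (y:ℂ) ^ a / (((-(c:ℝ)) : ℂ) - (y:ℂ))
          = ∫ y in Set.Ioi (0:ℝ), (y:ℂ) ^ a / (-(c:ℂ) - (y:ℂ)) := by
            apply MeasureTheory.setIntegral_congr_fun measurableSet_Ioi
            intro y hy
            rfl
        _ = (c:ℂ) ^ a * ((Real.pi : ℂ) / Complex.sin ((Real.pi : ℂ) * a)) := hGneg
        _ = ((Real.pi : ℂ) / Complex.sin ((Real.pi : ℂ) * a)) * (-((-(c:ℝ)) : ℂ)) ^ a := by
            rw [he2]; ring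
  have := hG.eqOn_of_preconnected_of_frequently_eq hH hUconn hmem hfreq
  exact this hz


theorem stmt_5 (a : ℂ) (h1 : -1 < a.re) (h2 : a.re < 0) (ε : ℝ) (hε : 0 < ε) (x : ℝ) :
    ∫ y in Set.Ioi (0:ℝ), (y : ℂ) ^ a / ((x : ℂ) - (y : ℂ) + Complex.I * (ε : ℂ))
      = (Real.pi : ℂ) / Complex.sin ((Real.pi : ℂ) * a) * Complex.exp (-Complex.I * Real.pi * a)
          * ((x : ℂ) + Complex.I * (ε : ℂ)) ^ a := by
  set z : ℂ := (x : ℂ) + Complex.I * (ε : ℂ) with hz_def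
  have hzim : z.im = ε := by simp [hz_def]
  have hz : z.re < 0 ∨ z.im ≠ 0 := Or.inr (by rw [hzim]; exact hε.ne')
  have hzpos : 0 < z.im := by rw [hzim]; exact hε
  have hz0 : z ≠ 0 := by
    intro h
    rw [h] at hzim
    simp at hzim
    linarith
  have hmain := aux_main a h1 h2 z hz
  have hint : ∀ y ∈ Set.Ioi (0:ℝ), (y:ℂ) ^ a / ((x : ℂ) - (y : ℂ) + Complex.I * (ε : ℂ))
      = (y:ℂ) ^ a / (z - (y:ℂ)) := by
    intro y hy
    congr 1
    rw [hz_def]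
    ring
  rw [MeasureTheory.setIntegral_congr_fun measurableSet_Ioi hint, hmain]
  -- now show (-z)^a = exp(-I π a) * z^a
  have hlog : Complex.log (-z) = Complex.log z - (Real.pi : ℂ) * Complex.I := by
    have harg : (-z).arg = z.arg - Real.pi := Complex.arg_neg_eq_arg_sub_pi_of_im_pos hzpos
    rw [Complex.log, Complex.log, norm_neg, harg]
    push_cast
    ring
  have hcpow : (-z) ^ a = Complex.exp (-Complex.I * Real.pi * a) * z ^ a := by
    rw [Complex.cpow_def_of_ne_zero (neg_ne_zero.mpr hz0), Complex.cpow_def_of_ne_zero hz0, hlog,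
      sub_mul, Complex.exp_sub, div_eq_mul_inv, ← Complex.exp_neg]
    rw [mul_comm]
    congr 1
    ring
  rw [hcpow]
  ring
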